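/- arXiv:0803.3198 — 3 statements merged into one kernel-verified Lean document; each statement's English description precedes it below -/
import Mathlib

section
/- For each fixed k, the Bessel polynomial coefficient α_k^(n) = ((-n)_k · 2^k)/((-2n)_k · k!) is monotonically increasing in n for n ≥ k, satisfies α_k^(n) ≤ 1/k!, and converges to 1/k! as n → ∞. -/
open MeasureTheory Filter Set

/-- Pochhammer symbol (rising factorial) evaluated at a real number. -/
noncomputable def poch (a : ℝ) (k : ℕ) : ℝ := (ascPochhammer ℝ k).eval a

/-- Coefficients `α_k^(n)` of the `n`-th Bessel polynomial. -/
noncomputable def besselCoeff (n k : ℕ) : ℝ :=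
  (poch (-(n : ℝ)) k * 2 ^ k) / (poch (-(2 * n : ℝ)) k * (Nat.factorial k))

/-- The `n`-th Bessel polynomial as a real function. -/
noncomputable def besselPoly (n : ℕ) (u : ℝ) : ℝ :=
  ∑ k ∈ Finset.range (n + 1), besselCoeff n k * u ^ k

lemma poch_eq_prod (a : ℝ) (k : ℕ) : poch a k = ∏ j ∈ Finset.range k, (a + j) := by
  induction k with
  | zero => simp [poch]
  | succ k ih =>
      rw [Finset.prod_range_succ, ← ih]
      simpa [poch] using ascPochhammer_succ_eval k a

lemma besselCoeff_eq (n k : ℕ) (h : k ≤ n) :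
    besselCoeff n k
      = (∏ j ∈ Finset.range k, (2 * (n : ℝ) - 2 * j) / (2 * (n : ℝ) - j))
        / (Nat.factorial k : ℝ) := by
  have hB : ∀ j ∈ Finset.range k, (2 * (n : ℝ) - j) ≠ 0 := by
    intro j hj
    have hj' : j < k := Finset.mem_range.mp hj
    have : (j : ℝ) < 2 * n := by
      have : (j : ℝ) < k := by exact_mod_cast hj'
      have hn : (k : ℝ) ≤ n := by exact_mod_cast h
      nlinarith
    linarith
  have hBne : (∏ j ∈ Finset.range k, (2 * (n : ℝ) - j)) ≠ 0 :=
    Finset.prod_ne_zero_iff.mpr hB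
  rw [besselCoeff, poch_eq_prod, poch_eq_prod]
  have e1 : (∏ j ∈ Finset.range k, (-(n : ℝ) + j)) * 2 ^ k
      = (-1 : ℝ) ^ k * ∏ j ∈ Finset.range k, (2 * (n : ℝ) - 2 * j) := by
    have h2k : (2 : ℝ) ^ k = ∏ _j ∈ Finset.range k, (2 : ℝ) := by simp
    have hm1 : (-1 : ℝ) ^ k = ∏ _j ∈ Finset.range k, (-1 : ℝ) := by simp
    rw [h2k, hm1, ← Finset.prod_mul_distrib, ← Finset.prod_mul_distrib]
    exact Finset.prod_congr rfl fun j _ => by ring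
  have e2 : (∏ j ∈ Finset.range k, (-(2 * (n : ℝ)) + j))
      = (-1 : ℝ) ^ k * ∏ j ∈ Finset.range k, (2 * (n : ℝ) - j) := by
    have hm1 : (-1 : ℝ) ^ k = ∏ _j ∈ Finset.range k, (-1 : ℝ) := by simp
    rw [hm1, ← Finset.prod_mul_distrib]
    exact Finset.prod_congr rfl fun j _ => by ring
  push_cast
  rw [e1, e2, Finset.prod_div_distrib]
  have hm : ((-1 : ℝ) ^ k) ≠ 0 := by positivity
  field_simp

lemma factor_pos {n j k : ℕ} (hj : j < k) (h : k ≤ n) :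
    (0 : ℝ) < 2 * (n : ℝ) - j ∧ (0 : ℝ) < 2 * (n : ℝ) - 2 * j := by
  have hj' : (j : ℝ) < k := by exact_mod_cast hj
  have hn : (k : ℝ) ≤ n := by exact_mod_cast h
  constructor <;> nlinarith

/-- For fixed `k`, the coefficient `α_k^(n)` is increasing in `n` for `n ≥ k`,
bounded by `1/k!`, and converges to `1/k!` as `n → ∞`. -/
theorem besselCoeff_monotone_le_tendsto (k : ℕ) :
    (∀ m n : ℕ, k ≤ m → m ≤ n → besselCoeff m k ≤ besselCoeff n k) ∧
    (∀ n : ℕ, k ≤ n → besselCoeff n k ≤ 1 / (Nat.factorial k : ℝ)) ∧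
    Filter.Tendsto (fun n : ℕ => besselCoeff n k) Filter.atTop
      (nhds (1 / (Nat.factorial k : ℝ))) := by
  have hfact : (0 : ℝ) < (Nat.factorial k : ℝ) := by
    exact_mod_cast Nat.factorial_pos k
  refine ⟨?_, ?_, ?_⟩
  · intro m n hkm hmn
    rw [besselCoeff_eq m k hkm, besselCoeff_eq n k (hkm.trans hmn)]
    apply div_le_div_of_nonneg_right ?_ hfact.le
    apply Finset.prod_le_prod
    · intro j hj
      obtain ⟨h1, h2⟩ := factor_pos (Finset.mem_range.mp hj) hkm
      positivity
    · intro j hj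
      have hj' := Finset.mem_range.mp hj
      obtain ⟨hm1, hm2⟩ := factor_pos hj' hkm
      obtain ⟨hn1, hn2⟩ := factor_pos hj' (hkm.trans hmn)
      rw [div_le_div_iff₀ hm1 hn1]
      have : (m : ℝ) ≤ n := by exact_mod_cast hmn
      have hjnn : (0 : ℝ) ≤ j := j.cast_nonneg
      nlinarith
  · intro n hn
    rw [besselCoeff_eq n k hn]
    apply div_le_div_of_nonneg_right ?_ hfact.le
    apply Finset.prod_le_one
    · intro j hj
      obtain ⟨h1, h2⟩ := factor_pos (Finset.mem_range.mp hj) hn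
      positivity
    · intro j hj
      obtain ⟨h1, h2⟩ := factor_pos (Finset.mem_range.mp hj) hn
      rw [div_le_one h1]
      have : (0 : ℝ) ≤ j := j.cast_nonneg
      linarith
  · have hfac : ∀ j : ℕ, Filter.Tendsto
        (fun n : ℕ => (2 * (n : ℝ) - 2 * j) / (2 * (n : ℝ) - j)) Filter.atTop (nhds 1) := by
      intro j
      have hd : Filter.Tendsto (fun n : ℕ => 2 * (n : ℝ) - j) Filter.atTop Filter.atTop := by
        have : Filter.Tendsto (fun n : ℕ => 2 * (n : ℝ)) Filter.atTop Filter.atTop :=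
          (tendsto_natCast_atTop_atTop).const_mul_atTop two_pos
        simpa [sub_eq_add_neg] using Filter.tendsto_atTop_add_const_right _ (-(j : ℝ)) this
      have h0 : Filter.Tendsto (fun n : ℕ => (j : ℝ) / (2 * (n : ℝ) - j))
          Filter.atTop (nhds 0) := Filter.Tendsto.div_atTop tendsto_const_nhds hd
      have h1 : Filter.Tendsto (fun n : ℕ => 1 - (j : ℝ) / (2 * (n : ℝ) - j))
          Filter.atTop (nhds 1) := by
        simpa using (tendsto_const_nhds (x := (1 : ℝ)) (f := Filter.atTop (α := ℕ))).sub h0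
      apply h1.congr'
      filter_upwards [Filter.eventually_gt_atTop j] with n hn
      have hjn : (j : ℝ) < n := by exact_mod_cast hn
      have hne : 2 * (n : ℝ) - j ≠ 0 := by nlinarith
      field_simp
      ring
    have hprod : Filter.Tendsto
        (fun n : ℕ => ∏ j ∈ Finset.range k, (2 * (n : ℝ) - 2 * j) / (2 * (n : ℝ) - j))
        Filter.atTop (nhds 1) := by
      have := tendsto_finset_prod (Finset.range k)
        (fun j (_ : j ∈ Finset.range k) => hfac j)
      simpa using this
    have := hprod.div_const (Nat.factorial k : ℝ)
    apply this.congr'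
    filter_upwards [Filter.eventually_ge_atTop k] with n hn
    exact (besselCoeff_eq n k hn).symm
end

section
/- For each natural number n, the monomial u^n has the expansion u^n = Σ_{j=0}^n δ_j^(n) q_j(u) in terms of Bessel polynomials, where δ_j^(n) = ((n+1)!/2^n) · ((-1)^{n-j} (2j)!)/((n-j)! j! (2j+1-n)!) when (n-1)/2 ≤ j ≤ n and δ_j^(n) = 0 when 0 ≤ j < (n-1)/2. -/
open MeasureTheory Filter Set

/-- The `n`-th Bessel polynomial as a real polynomial. -/
noncomputable def besselP (n : ℕ) : Polynomial ℝ :=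
  ∑ k ∈ Finset.range (n + 1), Polynomial.C (besselCoeff n k) * Polynomial.X ^ k

/-- Carlitz' coefficients `δ_j^(n)`. -/
noncomputable def carlitzCoeff (n j : ℕ) : ℝ :=
  if n ≤ 2 * j + 1 then
    ((Nat.factorial (n + 1) : ℝ) / 2 ^ n) *
      ((-1 : ℝ) ^ (n - j) * (Nat.factorial (2 * j) : ℝ)) /
        ((Nat.factorial (n - j) : ℝ) * (Nat.factorial j : ℝ) *
          (Nat.factorial (2 * j + 1 - n) : ℝ))
  else 0

/- ### Auxiliary lemmas -/

lemma poch_neg_nat (m : ℕ) : ∀ k, k ≤ m → poch (-(m:ℝ)) k = (-1)^k * (m.descFactorial k) := by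
  intro k
  induction k with
  | zero => intro _; simp [poch]
  | succ k ih =>
    intro h
    have hk : k ≤ m := Nat.le_of_succ_le h
    rw [poch, ascPochhammer_succ_right, Polynomial.eval_mul]
    rw [show (ascPochhammer ℝ k).eval (-(m:ℝ)) = poch (-(m:ℝ)) k from rfl, ih hk]
    simp only [Polynomial.eval_add, Polynomial.eval_X, Polynomial.eval_natCast]
    rw [Nat.descFactorial_succ]
    have hc : ((m - k : ℕ) : ℝ) = (m : ℝ) - k := by
      push_cast [Nat.cast_sub hk]; ring
    push_cast [hc]
    ring

lemma besselCoeff_eq_s6 (j k : ℕ) (h : k ≤ j) :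
    besselCoeff j k = (j.descFactorial k * 2 ^ k) / ((2*j).descFactorial k * k.factorial) := by
  have h2 : k ≤ 2*j := le_trans h (by omega)
  rw [besselCoeff, show -(2 * (j:ℝ)) = -((2*j : ℕ) : ℝ) by push_cast; ring,
    poch_neg_nat j k h, poch_neg_nat (2*j) k h2]
  rw [mul_assoc, mul_assoc]
  exact mul_div_mul_left _ _ (pow_ne_zero _ (by norm_num))

lemma fact_prod_aux (a : ℕ) : ∀ b, a.factorial * ∏ r ∈ Finset.range b, (a+1+r) = (a+b).factorial := by
  intro b
  induction b with
  | zero => simp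
  | succ b ih =>
    rw [Finset.prod_range_succ, ← mul_assoc, ih]
    rw [show a + (b+1) = (a+b) + 1 from rfl, Nat.factorial_succ]
    ring

lemma alt_sum_eq_zero : ∀ (m : ℕ) (P : Polynomial ℝ), P.degree < m →
    ∑ i ∈ Finset.range (m+1), (-1:ℝ)^i * (m.choose i) * P.eval (i:ℝ) = 0 := by
  intro m
  induction m with
  | zero =>
    intro P hP
    have h0 : P = 0 := by
      rw [← Polynomial.degree_eq_bot]
      exact Nat.WithBot.lt_zero_iff.mp (by exact_mod_cast hP)
    simp [h0]
  | succ m ih =>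
    intro P hP
    set Q : Polynomial ℝ := P - P.comp (Polynomial.X + 1) with hQdef
    have hQeval : ∀ x : ℕ, Q.eval (x:ℝ) = P.eval (x:ℝ) - P.eval ((x+1:ℕ):ℝ) := by
      intro x
      simp [hQdef, Polynomial.eval_comp]
    have hQdeg : Q.degree < m := by
      by_cases hP0 : P = 0
      · simp [hQdef, hP0]
      · have hnd : P.natDegree ≤ m := by
          have := (Polynomial.natDegree_lt_iff_degree_lt hP0).mpr hP
          omega
        by_cases hc : P.natDegree = 0
        · obtain ⟨a, rfl⟩ := Polynomial.natDegree_eq_zero.mp hc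
          simp [hQdef]
        · have hx1 : (Polynomial.X + 1 : Polynomial ℝ).natDegree = 1 := by
            simpa using Polynomial.natDegree_X_add_C (1:ℝ)
          have hlc : P.leadingCoeff = (P.comp (Polynomial.X+1)).leadingCoeff := by
            rw [Polynomial.leadingCoeff_comp (by rw [hx1]; omega)]
            have : (Polynomial.X + 1 : Polynomial ℝ).leadingCoeff = 1 := by
              simpa using Polynomial.leadingCoeff_X_add_C (1:ℝ)
            rw [this, one_pow, mul_one]
          have hdeq : P.degree = (P.comp (Polynomial.X+1)).degree := by
            have h1 : (P.comp (Polynomial.X+1)).natDegree = P.natDegree := by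
              rw [Polynomial.natDegree_comp, hx1, mul_one]
            have hcomp0 : P.comp (Polynomial.X+1) ≠ 0 := by
              intro h
              apply hP0
              have := hlc
              rw [h] at this
              simpa [Polynomial.leadingCoeff_eq_zero] using this
            rw [Polynomial.degree_eq_natDegree hP0, Polynomial.degree_eq_natDegree hcomp0, h1]
          have := Polynomial.degree_sub_lt hdeq hP0 hlc
          calc Q.degree < P.degree := this
            _ = (P.natDegree : WithBot ℕ) := Polynomial.degree_eq_natDegree hP0
            _ ≤ (m : WithBot ℕ) := by exact_mod_cast hnd
    have step : ∑ i ∈ Finset.range (m+2), (-1:ℝ)^i * ((m+1).choose i) * P.eval (i:ℝ)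
        = ∑ i ∈ Finset.range (m+1), (-1:ℝ)^i * (m.choose i) * Q.eval (i:ℝ) := by
      have hsplit : ∀ i, (-1:ℝ)^(i+1) * ((m+1).choose (i+1)) * P.eval ((i+1:ℕ):ℝ)
          = (-1:ℝ)^(i+1) * (m.choose i) * P.eval ((i+1:ℕ):ℝ)
            + (-1:ℝ)^(i+1) * (m.choose (i+1)) * P.eval ((i+1:ℕ):ℝ) := by
        intro i
        have : (((m+1).choose (i+1) : ℕ) : ℝ) = (m.choose i : ℝ) + (m.choose (i+1) : ℝ) := by
          exact_mod_cast Nat.choose_succ_succ m i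
        rw [this]; ring
      rw [Finset.sum_range_succ' _ (m+1)]
      simp only [hsplit]
      rw [Finset.sum_add_distrib]
      have hB : (∑ i ∈ Finset.range (m+1), (-1:ℝ)^(i+1) * (m.choose (i+1)) * P.eval ((i+1:ℕ):ℝ))
          + (-1:ℝ)^0 * ((m+1).choose 0) * P.eval ((0:ℕ):ℝ)
          = ∑ i ∈ Finset.range (m+1), (-1:ℝ)^i * (m.choose i) * P.eval (i:ℝ) := by
        have := Finset.sum_range_succ' (fun i => (-1:ℝ)^i * (m.choose i) * P.eval (i:ℝ)) (m+1)
        rw [Finset.sum_range_succ] at this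
        simp only [Nat.choose_succ_self, Nat.cast_zero, mul_zero, zero_mul, add_zero,
          Nat.choose_zero_right, Nat.cast_one, pow_zero, one_mul] at this
        simp only [Nat.choose_zero_right, Nat.cast_zero, Nat.cast_one, pow_zero, one_mul]
        linarith [this]
      rw [add_assoc, hB]
      have : ∀ i ∈ Finset.range (m+1), (-1:ℝ)^i * (m.choose i) * Q.eval (i:ℝ)
          = (-1:ℝ)^i * (m.choose i) * P.eval (i:ℝ)
            + (-1:ℝ)^(i+1) * (m.choose i) * P.eval ((i+1:ℕ):ℝ) := by
        intro i _
        rw [hQeval]; push_cast; ring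
      rw [Finset.sum_congr rfl this, Finset.sum_add_distrib]
      ring
    rw [step]
    exact ih Q hQdeg

lemma carlitz_key_lt (n k : ℕ) (hk : k < n) :
    ∑ j ∈ Finset.range (n+1), carlitzCoeff n j * (if k ≤ j then besselCoeff j k else 0) = 0 := by
  set m := n - k with hm
  have hm1 : 1 ≤ m := by omega
  have hmn : m ≤ n := by omega
  set P : Polynomial ℝ := ∏ r ∈ Finset.range (m-1),
      (Polynomial.C (-2 : ℝ) * Polynomial.X + Polynomial.C ((n:ℝ)+2+r)) with hPdef
  have hPeval : ∀ x : ℕ, P.eval (x:ℝ) = ∏ r ∈ Finset.range (m-1), ((n:ℝ)+2+r - 2*x) := by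
    intro x
    rw [hPdef, Polynomial.eval_prod]
    apply Finset.prod_congr rfl
    intro r _
    simp
    ring
  have hPdeg : P.degree < (m : WithBot ℕ) := by
    have h1 : P.natDegree ≤ m - 1 := by
      refine le_trans (Polynomial.natDegree_prod_le _ _) ?_
      calc ∑ r ∈ Finset.range (m-1),
            (Polynomial.C (-2:ℝ) * Polynomial.X + Polynomial.C ((n:ℝ)+2+r)).natDegree
          ≤ ∑ _r ∈ Finset.range (m-1), 1 := by
            apply Finset.sum_le_sum; intro r _; exact Polynomial.natDegree_linear_le
        _ = m - 1 := by simp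
    calc P.degree ≤ (P.natDegree : WithBot ℕ) := Polynomial.degree_le_natDegree
      _ < (m : WithBot ℕ) := by exact_mod_cast (by omega : P.natDegree < m)
  have hPeval_zero : ∀ i : ℕ, i ≤ m → n + 2 ≤ 2*i → P.eval (i:ℝ) = 0 := by
    intro i him h2i
    rw [hPeval]
    apply Finset.prod_eq_zero (i := 2*i - (n+2))
    · exact Finset.mem_range.mpr (by omega)
    · push_cast [Nat.cast_sub h2i]
      ring
  have hPeval_fact : ∀ i : ℕ, 2*i ≤ n+1 →
      ((n+1-2*i).factorial : ℝ) * P.eval (i:ℝ) = ((n+m-2*i).factorial : ℝ) := by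
    intro i h2i
    rw [hPeval]
    have hcast : ∀ r ∈ Finset.range (m-1), ((n:ℝ)+2+r-2*i) = (((n+1-2*i)+1+r : ℕ) : ℝ) := by
      intro r _
      push_cast [Nat.cast_sub h2i]
      ring
    rw [Finset.prod_congr rfl hcast, ← Nat.cast_prod, ← Nat.cast_mul, fact_prod_aux,
      show n+1-2*i+(m-1) = n+m-2*i from by omega]
  have hterm : ∀ i ∈ Finset.range (n+1),
      carlitzCoeff n (n-i) * (if k ≤ n-i then besselCoeff (n-i) k else 0)
      = ((n+1).factorial : ℝ)/(2^m * k.factorial * m.factorial)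
        * ((-1:ℝ)^i * (m.choose i) * P.eval (i:ℝ)) := by
    intro i hi
    have hin : i ≤ n := by
      have := Finset.mem_range.mp hi; omega
    by_cases him : i ≤ m
    · by_cases h2i : 2*i ≤ n+1
      · -- main case
        have hkj : k ≤ n - i := by omega
        rw [if_pos hkj, besselCoeff_eq_s6 _ _ hkj, carlitzCoeff, if_pos (by omega : n ≤ 2*(n-i)+1)]
        rw [show n - (n-i) = i from by omega, show 2*(n-i)+1-n = n+1-2*i from by omega]
        have hfne : ∀ a : ℕ, (a.factorial : ℝ) ≠ 0 :=
          fun a => Nat.cast_ne_zero.mpr (Nat.factorial_ne_zero a)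
        have f1 : ((m-i).factorial : ℝ) * ((n-i).descFactorial k : ℝ) = ((n-i).factorial : ℝ) := by
          rw [show m - i = (n-i) - k from by omega]
          exact_mod_cast Nat.factorial_mul_descFactorial hkj
        have f2 : ((n+m-2*i).factorial : ℝ) * ((2*(n-i)).descFactorial k : ℝ)
            = ((2*(n-i)).factorial : ℝ) := by
          rw [show n+m-2*i = 2*(n-i) - k from by omega]
          exact_mod_cast Nat.factorial_mul_descFactorial (show k ≤ 2*(n-i) by omega)
        have f3 : (m.choose i : ℝ) * (i.factorial : ℝ) * ((m-i).factorial : ℝ)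
            = (m.factorial : ℝ) := by
          exact_mod_cast Nat.choose_mul_factorial_mul_factorial him
        have f4 : (2:ℝ)^n = 2^m * 2^k := by rw [← pow_add]; congr 1; omega
        have f5 := hPeval_fact i h2i
        have g1 : ((n-i).descFactorial k : ℝ) = ((n-i).factorial : ℝ) / ((m-i).factorial : ℝ) := by
          rw [eq_div_iff (hfne _)]; linarith [f1]
        have g2 : ((2*(n-i)).descFactorial k : ℝ)
            = ((2*(n-i)).factorial : ℝ) / ((n+m-2*i).factorial : ℝ) := by
          rw [eq_div_iff (hfne _)]; linarith [f2]
        have g3 : (m.choose i : ℝ) = (m.factorial : ℝ)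
            / ((i.factorial : ℝ) * ((m-i).factorial : ℝ)) := by
          rw [eq_div_iff (by positivity)]; linarith [f3]
        have g5 : P.eval (i:ℝ) = ((n+m-2*i).factorial : ℝ) / ((n+1-2*i).factorial : ℝ) := by
          rw [eq_div_iff (hfne _)]; linarith [f5]
        rw [g1, g2, g3, g5, f4]
        field_simp
      · -- carlitz coefficient vanishes
        rw [carlitzCoeff, if_neg (by omega), hPeval_zero i him (by omega)]
        ring
    · -- bessel factor vanishes
      rw [if_neg (by omega), Nat.choose_eq_zero_of_lt (by omega)]
      simp
  have hrefl : ∑ j ∈ Finset.range (n+1), carlitzCoeff n j * (if k ≤ j then besselCoeff j k else 0)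
      = ∑ i ∈ Finset.range (n+1),
          carlitzCoeff n (n-i) * (if k ≤ n-i then besselCoeff (n-i) k else 0) :=
    (Finset.sum_range_reflect
      (fun j => carlitzCoeff n j * (if k ≤ j then besselCoeff j k else 0)) (n+1)).symm
  rw [hrefl, Finset.sum_congr rfl hterm, ← Finset.mul_sum]
  have hshrink : ∑ i ∈ Finset.range (n+1), (-1:ℝ)^i * (m.choose i) * P.eval (i:ℝ)
      = ∑ i ∈ Finset.range (m+1), (-1:ℝ)^i * (m.choose i) * P.eval (i:ℝ) := by
    symm
    apply Finset.sum_subset (Finset.range_subset_range.mpr (by omega))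
    intro x _ hx
    rw [Nat.choose_eq_zero_of_lt (by simp [Finset.mem_range] at hx; omega)]
    simp
  rw [hshrink, alt_sum_eq_zero m P hPdeg, mul_zero]

lemma carlitz_key_eq (n : ℕ) :
    ∑ j ∈ Finset.range (n+1), carlitzCoeff n j * (if n ≤ j then besselCoeff j n else 0) = 1 := by
  rw [Finset.sum_eq_single n]
  · rw [if_pos le_rfl, besselCoeff_eq_s6 n n le_rfl, carlitzCoeff, if_pos (by omega)]
    rw [Nat.descFactorial_self, Nat.sub_self, show 2*n+1-n = n+1 from by omega]
    have hfne : ∀ a : ℕ, (a.factorial : ℝ) ≠ 0 :=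
      fun a => Nat.cast_ne_zero.mpr (Nat.factorial_ne_zero a)
    have f2 : (n.factorial : ℝ) * ((2*n).descFactorial n : ℝ) = ((2*n).factorial : ℝ) := by
      have h := Nat.factorial_mul_descFactorial (show n ≤ 2*n by omega)
      rw [show 2*n - n = n from by omega] at h
      exact_mod_cast h
    have g2 : ((2*n).descFactorial n : ℝ) = ((2*n).factorial : ℝ) / (n.factorial : ℝ) := by
      rw [eq_div_iff (hfne _)]; linarith [f2]
    rw [g2]
    field_simp
    ring
  · intro j hj hne
    have := Finset.mem_range.mp hj
    rw [if_neg (by omega)]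
    ring
  · intro h
    exact absurd (Finset.self_mem_range_succ n) h

/-- Carlitz' inversion formula: `u^n = Σ_{j=0}^n δ_j^(n) q_j(u)` as polynomials. -/
theorem carlitz_inversion (n : ℕ) :
    (Polynomial.X : Polynomial ℝ) ^ n =
      ∑ j ∈ Finset.range (n + 1), Polynomial.C (carlitzCoeff n j) * besselP j := by
  apply Polynomial.ext
  intro c
  rw [Polynomial.coeff_X_pow, Polynomial.finset_sum_coeff]
  have hbp : ∀ j, (Polynomial.C (carlitzCoeff n j) * besselP j).coeff c
      = carlitzCoeff n j * (if c ≤ j then besselCoeff j c else 0) := by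
    intro j
    rw [Polynomial.coeff_C_mul]
    congr 1
    rw [besselP, Polynomial.finset_sum_coeff]
    have hstep : ∀ k ∈ Finset.range (j+1),
        (Polynomial.C (besselCoeff j k) * Polynomial.X ^ k).coeff c
        = if k = c then besselCoeff j k else 0 := by
      intro k _
      rw [Polynomial.coeff_C_mul, Polynomial.coeff_X_pow]
      by_cases h : c = k
      · simp [h]
      · simp [h, Ne.symm h]
    rw [Finset.sum_congr rfl hstep,
      Finset.sum_ite_eq' (Finset.range (j+1)) c (fun k => besselCoeff j k)]
    simp [Nat.lt_succ_iff]
  rw [Finset.sum_congr rfl (fun j _ => hbp j)]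
  rcases lt_trichotomy c n with h | h | h
  · rw [if_neg (by omega), carlitz_key_lt n c h]
  · subst h
    rw [if_pos rfl, carlitz_key_eq]
  · rw [if_neg (by omega)]
    symm
    apply Finset.sum_eq_zero
    intro j hj
    have := Finset.mem_range.mp hj
    rw [if_neg (by omega)]
    ring
end

section
/- Let h: (0,∞) → [0,∞) be measurable with h(t) ~ K t^{-ν-1} as t → ∞ for some K > 0, ν > 0, and such that ∫_0^{t₀} t^{-d/2} h(t) dt < ∞ for all t₀ > 0. Then the subordinated function F(x) = ∫_0^∞ (4πt)^{-d/2} exp(-|x|²/(4t)) h(t) dt on ℝ^d satisfies F(x) ~ K · (2^{2ν}/π^{d/2}) Γ(ν + d/2) |x|^{-2ν-d} as |x| → ∞. -/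
open MeasureTheory Filter Set

lemma exp_neg_le_factorial_div (z : ℝ) (hz : 0 < z) (m : ℕ) :
    Real.exp (-z) ≤ m.factorial / z ^ m := by
  have h1 : z ^ m / m.factorial ≤ Real.exp z := Real.pow_div_factorial_le_exp z hz.le m
  rw [show (m.factorial : ℝ) / z ^ m = (z ^ m / (m.factorial : ℝ))⁻¹ by rw [inv_div],
    Real.exp_neg]
  gcongr

lemma aux_gamma_key {p a : ℝ} : ∀ x : ℝ, x ∈ Ioi (0:ℝ) →
    (|(-1:ℝ)| * x ^ ((-1:ℝ) - 1)) • ((x ^ (-1:ℝ)) ^ (-p - 1) * Real.exp (-(a / x ^ (-1:ℝ))))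
      = x ^ (p - 1) * Real.exp (-(a * x)) := by
  intro x hx
  have hx0 : (0:ℝ) < x := hx
  have h2 : (x ^ (-1:ℝ)) ^ (-p - 1) = x ^ (p + 1) := by
    rw [Real.rpow_neg_one, Real.inv_rpow hx0.le, ← Real.rpow_neg hx0.le]
    congr 1; ring
  have h3 : a / x ^ (-1:ℝ) = a * x := by
    rw [Real.rpow_neg_one]; field_simp
  have h4 : x ^ ((-1:ℝ) - 1) * x ^ (p + 1) = x ^ (p - 1) := by
    rw [← Real.rpow_add hx0]; congr 1; ring
  rw [abs_neg, abs_one, one_mul, smul_eq_mul, h2, h3, ← mul_assoc, h4]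

lemma aux_gamma_integrable {p a : ℝ} (hp : 0 < p) (ha : 0 < a) :
    IntegrableOn (fun t : ℝ => t ^ (-p - 1) * Real.exp (-(a / t))) (Ioi 0) := by
  have base : IntegrableOn (fun x : ℝ => x ^ (p - 1) * Real.exp (-(a * x))) (Ioi 0) := by
    have := integrableOn_rpow_mul_exp_neg_mul_rpow (by linarith : (-1:ℝ) < p - 1) (by norm_num : (0:ℝ) < 1) ha
    refine this.congr_fun (fun x hx => ?_) measurableSet_Ioi
    beta_reduce
    rw [Real.rpow_one, neg_mul]
  rw [← integrableOn_Ioi_comp_rpow_iff _ (by norm_num : (-1:ℝ) ≠ 0)]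
  exact base.congr_fun (fun x hx => (aux_gamma_key x hx).symm) measurableSet_Ioi

lemma aux_gamma_value {p a : ℝ} (hp : 0 < p) (ha : 0 < a) :
    ∫ t in Ioi (0:ℝ), t ^ (-p - 1) * Real.exp (-(a / t)) = Real.Gamma p / a ^ p := by
  rw [← integral_comp_rpow_Ioi _ (by norm_num : (-1:ℝ) ≠ 0),
    setIntegral_congr_fun measurableSet_Ioi (aux_gamma_key (p := p) (a := a)),
    Real.integral_rpow_mul_exp_neg_mul_Ioi hp ha, one_div, Real.inv_rpow ha.le,
    inv_mul_eq_div]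

lemma aux_ptwise (d : ℕ) (ν r : ℝ) {t : ℝ} (ht : 0 < t) :
    (4 * Real.pi * t) ^ (-(d : ℝ) / 2) * Real.exp (-r ^ 2 / (4 * t)) * t ^ (-ν - 1)
      = (4 * Real.pi) ^ (-(d : ℝ) / 2) *
        (t ^ (-(ν + (d : ℝ) / 2) - 1) * Real.exp (-(r ^ 2 / 4 / t))) := by
  have e1 : (4 * Real.pi * t) ^ (-(d : ℝ) / 2)
      = (4 * Real.pi) ^ (-(d : ℝ) / 2) * t ^ (-(d : ℝ) / 2) :=
    Real.mul_rpow (by positivity) ht.le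
  have e2 : -r ^ 2 / (4 * t) = -(r ^ 2 / 4 / t) := by ring
  have e3 : t ^ (-(d : ℝ) / 2) * t ^ (-ν - 1) = t ^ (-(ν + (d : ℝ) / 2) - 1) := by
    rw [← Real.rpow_add ht]; congr 1; ring
  rw [e1, e2, ← e3]; ring

lemma aux_J (d : ℕ) (ν r : ℝ) (hν : 0 < ν) (hr : 0 < r) :
    ∫ t in Ioi (0:ℝ),
        (4 * Real.pi * t) ^ (-(d : ℝ) / 2) * Real.exp (-r ^ 2 / (4 * t)) * t ^ (-ν - 1)
      = (2 ^ (2 * ν) / Real.pi ^ ((d : ℝ) / 2)) * Real.Gamma (ν + (d : ℝ) / 2)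
        * r ^ (-2 * ν - (d : ℝ)) := by
  have hπ : (0:ℝ) < Real.pi := Real.pi_pos
  have hp : 0 < ν + (d : ℝ) / 2 := by positivity
  have ha : (0:ℝ) < r ^ 2 / 4 := by positivity
  rw [setIntegral_congr_fun measurableSet_Ioi (fun t ht => aux_ptwise d ν r ht),
    integral_const_mul, aux_gamma_value hp ha]
  have h4 : ((r:ℝ) ^ 2 / 4) ^ (ν + (d : ℝ) / 2)
      = r ^ (2 * (ν + (d : ℝ) / 2)) / 4 ^ (ν + (d : ℝ) / 2) := by
    rw [Real.div_rpow (by positivity) (by norm_num), ← Real.rpow_natCast r 2,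
      ← Real.rpow_mul hr.le]
    norm_num
  have hm1 : (4 * Real.pi) ^ (-(d : ℝ) / 2)
      = (4:ℝ) ^ (-(d : ℝ) / 2) * Real.pi ^ (-(d : ℝ) / 2) :=
    Real.mul_rpow (by norm_num) hπ.le
  have hm2 : Real.pi ^ (-(d : ℝ) / 2) = (Real.pi ^ ((d : ℝ) / 2))⁻¹ := by
    rw [neg_div, Real.rpow_neg hπ.le]
  have hm4 : r ^ (-2 * ν - (d : ℝ)) = (r ^ (2 * (ν + (d : ℝ) / 2)))⁻¹ := by
    rw [← Real.rpow_neg hr.le]; congr 1; ring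
  have hm5 : (4:ℝ) ^ (-(d : ℝ) / 2) * 4 ^ (ν + (d : ℝ) / 2) = 4 ^ ν := by
    rw [← Real.rpow_add (by norm_num : (0:ℝ) < 4)]; congr 1; ring
  have hm6 : (2:ℝ) ^ (2 * ν) = 4 ^ ν := by
    rw [Real.rpow_mul (by norm_num : (0:ℝ) ≤ 2)]
    norm_num
  have hne1 : Real.pi ^ ((d : ℝ) / 2) ≠ 0 := (Real.rpow_pos_of_pos hπ _).ne'
  have hne2 : r ^ (2 * (ν + (d : ℝ) / 2)) ≠ 0 := (Real.rpow_pos_of_pos hr _).ne'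
  have hne3 : (4:ℝ) ^ (ν + (d : ℝ) / 2) ≠ 0 := (Real.rpow_pos_of_pos (by norm_num) _).ne'
  rw [h4, hm1, hm2, hm4, hm6, ← hm5]
  field_simp

lemma aux_J_int (d : ℕ) (ν r : ℝ) (hν : 0 < ν) (hr : 0 < r) :
    IntegrableOn (fun t : ℝ =>
      (4 * Real.pi * t) ^ (-(d : ℝ) / 2) * Real.exp (-r ^ 2 / (4 * t)) * t ^ (-ν - 1))
      (Ioi 0) := by
  have hp : 0 < ν + (d : ℝ) / 2 := by positivity
  have ha : (0:ℝ) < r ^ 2 / 4 := by positivity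
  have := (aux_gamma_integrable hp ha).const_mul ((4 * Real.pi) ^ (-(d : ℝ) / 2))
  exact IntegrableOn.congr_fun this (fun t ht => (aux_ptwise d ν r ht).symm) measurableSet_Ioi

set_option maxHeartbeats 1000000 in
lemma subord_main (d : ℕ) (hd : 1 ≤ d) (h : ℝ → ℝ) (K ν : ℝ)
    (hK : 0 < K) (hν : 0 < ν) (hmeas : Measurable h) (hnn : ∀ t : ℝ, 0 < t → 0 ≤ h t)
    (hasymp : Filter.Tendsto (fun t : ℝ => h t / (K * t ^ (-ν - 1)))
      Filter.atTop (nhds 1))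
    (hint : ∀ t₀ : ℝ, 0 < t₀ →
      MeasureTheory.IntegrableOn (fun t : ℝ => t ^ (-(d : ℝ) / 2) * h t) (Set.Ioc 0 t₀)) :
    Filter.Tendsto
      (fun r : ℝ =>
        (∫ t in Set.Ioi (0 : ℝ),
            (4 * Real.pi * t) ^ (-(d : ℝ) / 2) * Real.exp (-r ^ 2 / (4 * t)) * h t) /
          (K * (2 ^ (2 * ν) / Real.pi ^ ((d : ℝ) / 2)) * Real.Gamma (ν + d / 2) *
            r ^ (-2 * ν - d)))
      Filter.atTop (nhds 1) := by
  have hπ : (0:ℝ) < Real.pi := Real.pi_pos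
  have hp0 : 0 < ν + (d : ℝ) / 2 := by positivity
  set c4 : ℝ := (4 * Real.pi) ^ (-(d : ℝ) / 2) with hc4_def
  have hc4 : 0 < c4 := by rw [hc4_def]; positivity
  set C : ℝ := K * (2 ^ (2 * ν) / Real.pi ^ ((d : ℝ) / 2)) * Real.Gamma (ν + (d : ℝ) / 2)
    with hC_def
  have hC0 : 0 < C := by
    have hΓ := Real.Gamma_pos_of_pos hp0
    have h2 : (0:ℝ) < 2 ^ (2 * ν) := Real.rpow_pos_of_pos (by norm_num) _
    have h3 : (0:ℝ) < Real.pi ^ ((d : ℝ) / 2) := Real.rpow_pos_of_pos hπ _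
    rw [hC_def]
    exact mul_pos (mul_pos hK (div_pos h2 h3)) hΓ
  have hKJ : ∀ r : ℝ, 0 < r →
      K * ∫ t in Ioi (0:ℝ),
          (4 * Real.pi * t) ^ (-(d : ℝ) / 2) * Real.exp (-r ^ 2 / (4 * t)) * t ^ (-ν - 1)
        = C * r ^ (-2 * ν - (d : ℝ)) := by
    intro r hr
    rw [aux_J d ν r hν hr, hC_def]; ring
  rw [Metric.tendsto_nhds]
  intro ε hε
  set δ : ℝ := min (ε / 4) (1 / 2) with hδ_def
  have hδ0 : 0 < δ := by rw [hδ_def]; exact lt_min (by linarith) one_half_pos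
  have hδε : δ ≤ ε / 4 := by rw [hδ_def]; exact min_le_left _ _
  have hδ1 : δ ≤ 1 / 2 := by rw [hδ_def]; exact min_le_right _ _
  obtain ⟨T₀, hT₀⟩ := eventually_atTop.mp (Metric.tendsto_nhds.mp hasymp δ hδ0)
  set T : ℝ := max T₀ 1 with hT_def
  have hT1 : (1:ℝ) ≤ T := by rw [hT_def]; exact le_max_right _ _
  have hT0 : (0:ℝ) < T := lt_of_lt_of_le one_pos hT1
  have hcomp : ∀ t : ℝ, T ≤ t →
      (1 - δ) * (K * t ^ (-ν - 1)) ≤ h t ∧ h t ≤ (1 + δ) * (K * t ^ (-ν - 1)) := by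
    intro t ht
    have ht0 : (0:ℝ) < t := lt_of_lt_of_le hT0 ht
    have hden : 0 < K * t ^ (-ν - 1) := mul_pos hK (Real.rpow_pos_of_pos ht0 _)
    have hd1 := hT₀ t (le_trans (le_max_left _ _) ht)
    rw [Real.dist_eq, abs_lt] at hd1
    have hq : h t / (K * t ^ (-ν - 1)) * (K * t ^ (-ν - 1)) = h t :=
      div_mul_cancel₀ _ hden.ne'
    constructor
    · have l1 : (1 - δ) * (K * t ^ (-ν - 1))
          ≤ h t / (K * t ^ (-ν - 1)) * (K * t ^ (-ν - 1)) :=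
        mul_le_mul_of_nonneg_right (by linarith) hden.le
      linarith
    · have l2 : h t / (K * t ^ (-ν - 1)) * (K * t ^ (-ν - 1))
          ≤ (1 + δ) * (K * t ^ (-ν - 1)) :=
        mul_le_mul_of_nonneg_right (by linarith) hden.le
      linarith
  set A₀ : ℝ := ∫ t in Ioc (0:ℝ) T, t ^ (-(d : ℝ) / 2) * h t with hA₀_def
  have hA₀ : 0 ≤ A₀ := by
    rw [hA₀_def]
    exact setIntegral_nonneg measurableSet_Ioc
      (fun t ht => mul_nonneg (Real.rpow_nonneg ht.1.le _) (hnn t ht.1))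
  set m : ℕ := ⌈ν + (d : ℝ) / 2⌉₊ + 1 with hm_def
  have hmp : ν + (d : ℝ) / 2 < (m:ℝ) := by
    refine lt_of_le_of_lt (Nat.le_ceil _) ?_
    rw [hm_def]; push_cast; linarith
  have hBint : IntegrableOn (fun t : ℝ => t ^ ((m:ℝ) - (ν + (d : ℝ) / 2) - 1)) (Ioc 0 T) := by
    rw [← intervalIntegrable_iff_integrableOn_Ioc_of_le hT0.le]
    exact intervalIntegral.intervalIntegrable_rpow' (by linarith)
  set B : ℝ := ∫ t in Ioc (0:ℝ) T, t ^ ((m:ℝ) - (ν + (d : ℝ) / 2) - 1) with hB_def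
  have hB : 0 ≤ B := by
    rw [hB_def]
    exact setIntegral_nonneg measurableSet_Ioc (fun t ht => Real.rpow_nonneg ht.1.le _)
  set B' : ℝ := c4 * (m.factorial : ℝ) * 4 ^ m * B with hB'_def
  have hB'nn : 0 ≤ B' := by
    rw [hB'_def]
    exact mul_nonneg (mul_nonneg (mul_nonneg hc4.le (by positivity)) (by positivity)) hB
  -- eventual smallness of the two error terms
  have tend1 : Tendsto (fun r : ℝ =>
      (c4 * A₀) * ((r ^ 2) ^ (ν + (d : ℝ) / 2) * Real.exp (-(1 / (4 * T)) * r ^ 2)))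
      atTop (nhds 0) := by
    have b1 := tendsto_rpow_mul_exp_neg_mul_atTop_nhds_zero (ν + (d : ℝ) / 2) (1 / (4 * T))
      (one_div_pos.mpr (by linarith))
    have b2 : Tendsto (fun r : ℝ =>
        (r ^ 2) ^ (ν + (d : ℝ) / 2) * Real.exp (-(1 / (4 * T)) * r ^ 2)) atTop (nhds 0) :=
      b1.comp (tendsto_pow_atTop (by norm_num : (2:ℕ) ≠ 0))
    simpa using b2.const_mul (c4 * A₀)
  have ev1 := tend1.eventually_lt_const
    (show (0:ℝ) < ε / 4 * C from mul_pos (by linarith) hC0)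
  have tend2 : Tendsto (fun r : ℝ =>
      (K * B') * r ^ (2 * (ν + (d : ℝ) / 2) - 2 * (m:ℝ))) atTop (nhds 0) := by
    have b1 := (tendsto_rpow_neg_atTop
      (show (0:ℝ) < 2 * (m:ℝ) - 2 * (ν + (d : ℝ) / 2) by linarith)).const_mul (K * B')
    simpa [neg_sub] using b1
  have ev2 := tend2.eventually_lt_const
    (show (0:ℝ) < ε / 4 * C from mul_pos (by linarith) hC0)
  filter_upwards [ev1, ev2, eventually_ge_atTop (1:ℝ)] with r h1 h2 hr1
  have hr0 : (0:ℝ) < r := lt_of_lt_of_le one_pos hr1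
  set f : ℝ → ℝ := fun t =>
    (4 * Real.pi * t) ^ (-(d : ℝ) / 2) * Real.exp (-r ^ 2 / (4 * t)) * h t with hf_def
  set g : ℝ → ℝ := fun t =>
    (4 * Real.pi * t) ^ (-(d : ℝ) / 2) * Real.exp (-r ^ 2 / (4 * t)) * t ^ (-ν - 1) with hg_def
  show dist ((∫ t in Ioi (0:ℝ), f t) / (C * r ^ (-2 * ν - (d : ℝ)))) 1 < ε
  have hwmeas : Measurable f := by simp only [hf_def]; fun_prop
  have hfnn : ∀ t : ℝ, 0 < t → 0 ≤ f t := by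
    intro t ht
    simp only [hf_def]
    exact mul_nonneg (mul_nonneg
      (Real.rpow_nonneg (mul_nonneg (by positivity) ht.le) _) (Real.exp_nonneg _)) (hnn t ht)
  have hgnn : ∀ t : ℝ, 0 < t → 0 ≤ g t := by
    intro t ht
    simp only [hg_def]
    exact mul_nonneg (mul_nonneg
      (Real.rpow_nonneg (mul_nonneg (by positivity) ht.le) _) (Real.exp_nonneg _))
      (Real.rpow_nonneg ht.le _)
  have hg_int : IntegrableOn g (Ioi 0) := by
    simp only [hg_def]; exact aux_J_int d ν r hν hr0
  have hg_int1 : IntegrableOn g (Ioc 0 T) := hg_int.mono_set Ioc_subset_Ioi_self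
  have hg_int2 : IntegrableOn g (Ioi T) := hg_int.mono_set (Ioi_subset_Ioi hT0.le)
  have hf_int1 : IntegrableOn f (Ioc 0 T) := by
    refine Integrable.mono' ((hint T hT0).const_mul c4) hwmeas.aestronglyMeasurable.restrict ?_
    filter_upwards [ae_restrict_mem measurableSet_Ioc] with t ht
    have ht0 : (0:ℝ) < t := ht.1
    have e1 : (4 * Real.pi * t) ^ (-(d : ℝ) / 2) = c4 * t ^ (-(d : ℝ) / 2) :=
      Real.mul_rpow (by positivity) ht0.le
    rw [Real.norm_eq_abs, abs_of_nonneg (hfnn t ht0)]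
    simp only [hf_def]
    have hexp1 : Real.exp (-r ^ 2 / (4 * t)) ≤ 1 := by
      rw [Real.exp_le_one_iff, neg_div]
      exact neg_nonpos.mpr (div_nonneg (sq_nonneg r) (by linarith))
    calc (4 * Real.pi * t) ^ (-(d : ℝ) / 2) * Real.exp (-r ^ 2 / (4 * t)) * h t
        = (c4 * (t ^ (-(d : ℝ) / 2) * h t)) * Real.exp (-r ^ 2 / (4 * t)) := by rw [e1]; ring
      _ ≤ (c4 * (t ^ (-(d : ℝ) / 2) * h t)) * 1 := by
          refine mul_le_mul_of_nonneg_left hexp1 ?_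
          exact mul_nonneg hc4.le (mul_nonneg (Real.rpow_nonneg ht0.le _) (hnn t ht0))
      _ = c4 * (t ^ (-(d : ℝ) / 2) * h t) := mul_one _
  have hf_int2 : IntegrableOn f (Ioi T) := by
    refine Integrable.mono'
      ((integrableOn_Ioi_rpow_of_lt (show -ν - 1 < -1 by linarith) hT0).const_mul (2 * K * c4))
      hwmeas.aestronglyMeasurable.restrict ?_
    filter_upwards [ae_restrict_mem measurableSet_Ioi] with t ht
    have hTt : T ≤ t := le_of_lt ht
    have ht0 : (0:ℝ) < t := lt_trans hT0 ht
    have ht1 : (1:ℝ) ≤ t := le_trans hT1 hTt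
    have e1 : (4 * Real.pi * t) ^ (-(d : ℝ) / 2) = c4 * t ^ (-(d : ℝ) / 2) :=
      Real.mul_rpow (by positivity) ht0.le
    rw [Real.norm_eq_abs, abs_of_nonneg (hfnn t ht0)]
    simp only [hf_def]
    have w1 : t ^ (-(d : ℝ) / 2) ≤ 1 := by
      refine Real.rpow_le_one_of_one_le_of_nonpos ht1 ?_
      rw [neg_div]
      exact neg_nonpos.mpr (by positivity)
    have w2 : Real.exp (-r ^ 2 / (4 * t)) ≤ 1 := by
      rw [Real.exp_le_one_iff, neg_div]
      exact neg_nonpos.mpr (div_nonneg (sq_nonneg r) (by linarith))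
    have hden : 0 < K * t ^ (-ν - 1) := mul_pos hK (Real.rpow_pos_of_pos ht0 _)
    have w3 : h t ≤ 2 * K * t ^ (-ν - 1) := by
      have hc2 := (hcomp t hTt).2
      have h2' : (1 + δ) * (K * t ^ (-ν - 1)) ≤ 2 * (K * t ^ (-ν - 1)) :=
        mul_le_mul_of_nonneg_right (by linarith) hden.le
      linarith
    have hh := hnn t ht0
    have hrp := Real.rpow_nonneg ht0.le (-(d : ℝ) / 2)
    have hexp := Real.exp_nonneg (-r ^ 2 / (4 * t))
    have hKt := (mul_pos hK (Real.rpow_pos_of_pos ht0 (-ν - 1))).le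
    calc (4 * Real.pi * t) ^ (-(d : ℝ) / 2) * Real.exp (-r ^ 2 / (4 * t)) * h t
        = c4 * (t ^ (-(d : ℝ) / 2) * (Real.exp (-r ^ 2 / (4 * t)) * h t)) := by rw [e1]; ring
      _ ≤ c4 * (1 * (1 * (2 * K * t ^ (-ν - 1)))) := by
          refine mul_le_mul_of_nonneg_left ?_ hc4.le
          refine mul_le_mul w1 ?_ (mul_nonneg hexp hh) zero_le_one
          refine mul_le_mul w2 w3 hh zero_le_one
      _ = 2 * K * c4 * t ^ (-ν - 1) := by ring
  have hsplitf : (∫ t in Ioi (0:ℝ), f t)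
      = (∫ t in Ioc (0:ℝ) T, f t) + ∫ t in Ioi T, f t := by
    rw [← setIntegral_union (Ioc_disjoint_Ioi le_rfl) measurableSet_Ioi hf_int1 hf_int2,
      Ioc_union_Ioi_eq_Ioi hT0.le]
  have hsplitg : (∫ t in Ioi (0:ℝ), g t)
      = (∫ t in Ioc (0:ℝ) T, g t) + ∫ t in Ioi T, g t := by
    rw [← setIntegral_union (Ioc_disjoint_Ioi le_rfl) measurableSet_Ioi hg_int1 hg_int2,
      Ioc_union_Ioi_eq_Ioi hT0.le]
  have hhead_nn : 0 ≤ ∫ t in Ioc (0:ℝ) T, f t :=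
    setIntegral_nonneg measurableSet_Ioc (fun t ht => hfnn t ht.1)
  have hG1_nn : 0 ≤ ∫ t in Ioc (0:ℝ) T, g t :=
    setIntegral_nonneg measurableSet_Ioc (fun t ht => hgnn t ht.1)
  have hG2_nn : 0 ≤ ∫ t in Ioi T, g t :=
    setIntegral_nonneg measurableSet_Ioi (fun t ht => hgnn t (lt_trans hT0 ht))
  have tail_ub : (∫ t in Ioi T, f t) ≤ (1 + δ) * K * ∫ t in Ioi T, g t := by
    rw [← integral_const_mul]
    refine setIntegral_mono_on hf_int2 (hg_int2.const_mul _) measurableSet_Ioi ?_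
    intro t ht
    have ht0 : (0:ℝ) < t := lt_trans hT0 ht
    have wnn : 0 ≤ (4 * Real.pi * t) ^ (-(d : ℝ) / 2) * Real.exp (-r ^ 2 / (4 * t)) :=
      mul_nonneg (Real.rpow_nonneg (mul_nonneg (by positivity) ht0.le) _) (Real.exp_nonneg _)
    have hcu := (hcomp t ht.le).2
    simp only [hf_def, hg_def]
    calc (4 * Real.pi * t) ^ (-(d : ℝ) / 2) * Real.exp (-r ^ 2 / (4 * t)) * h t
        ≤ (4 * Real.pi * t) ^ (-(d : ℝ) / 2) * Real.exp (-r ^ 2 / (4 * t))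
            * ((1 + δ) * (K * t ^ (-ν - 1))) := mul_le_mul_of_nonneg_left hcu wnn
      _ = (1 + δ) * K * ((4 * Real.pi * t) ^ (-(d : ℝ) / 2) * Real.exp (-r ^ 2 / (4 * t))
            * t ^ (-ν - 1)) := by ring
  have tail_lb : (1 - δ) * K * (∫ t in Ioi T, g t) ≤ ∫ t in Ioi T, f t := by
    rw [← integral_const_mul]
    refine setIntegral_mono_on (hg_int2.const_mul _) hf_int2 measurableSet_Ioi ?_
    intro t ht
    have ht0 : (0:ℝ) < t := lt_trans hT0 ht
    have wnn : 0 ≤ (4 * Real.pi * t) ^ (-(d : ℝ) / 2) * Real.exp (-r ^ 2 / (4 * t)) :=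
      mul_nonneg (Real.rpow_nonneg (mul_nonneg (by positivity) ht0.le) _) (Real.exp_nonneg _)
    have hcl := (hcomp t ht.le).1
    simp only [hf_def, hg_def]
    calc (1 - δ) * K * ((4 * Real.pi * t) ^ (-(d : ℝ) / 2) * Real.exp (-r ^ 2 / (4 * t))
            * t ^ (-ν - 1))
        = (4 * Real.pi * t) ^ (-(d : ℝ) / 2) * Real.exp (-r ^ 2 / (4 * t))
            * ((1 - δ) * (K * t ^ (-ν - 1))) := by ring
      _ ≤ (4 * Real.pi * t) ^ (-(d : ℝ) / 2) * Real.exp (-r ^ 2 / (4 * t)) * h t :=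
          mul_le_mul_of_nonneg_left hcl wnn
  have head_f : (∫ t in Ioc (0:ℝ) T, f t) ≤ c4 * Real.exp (-r ^ 2 / (4 * T)) * A₀ := by
    have e0 : c4 * Real.exp (-r ^ 2 / (4 * T)) * A₀
        = ∫ t in Ioc (0:ℝ) T, (c4 * Real.exp (-r ^ 2 / (4 * T))) * (t ^ (-(d : ℝ) / 2) * h t) := by
      rw [integral_const_mul, hA₀_def]
    rw [e0]
    refine setIntegral_mono_on hf_int1 ((hint T hT0).const_mul _) measurableSet_Ioc ?_
    intro t ht
    have ht0 : (0:ℝ) < t := ht.1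
    have e1 : (4 * Real.pi * t) ^ (-(d : ℝ) / 2) = c4 * t ^ (-(d : ℝ) / 2) :=
      Real.mul_rpow (by positivity) ht0.le
    have eexp : Real.exp (-r ^ 2 / (4 * t)) ≤ Real.exp (-r ^ 2 / (4 * T)) := by
      apply Real.exp_le_exp.mpr
      rw [neg_div, neg_div, neg_le_neg_iff]
      exact div_le_div_of_nonneg_left (sq_nonneg r) (by linarith) (by linarith [ht.2])
    simp only [hf_def]
    calc (4 * Real.pi * t) ^ (-(d : ℝ) / 2) * Real.exp (-r ^ 2 / (4 * t)) * h t
        = (c4 * (t ^ (-(d : ℝ) / 2) * h t)) * Real.exp (-r ^ 2 / (4 * t)) := by rw [e1]; ring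
      _ ≤ (c4 * (t ^ (-(d : ℝ) / 2) * h t)) * Real.exp (-r ^ 2 / (4 * T)) := by
          refine mul_le_mul_of_nonneg_left eexp ?_
          exact mul_nonneg hc4.le (mul_nonneg (Real.rpow_nonneg ht0.le _) (hnn t ht0))
      _ = (c4 * Real.exp (-r ^ 2 / (4 * T))) * (t ^ (-(d : ℝ) / 2) * h t) := by ring
  have headg : (∫ t in Ioc (0:ℝ) T, g t) ≤ B' / (r ^ 2) ^ m := by
    have hstep : ∀ t ∈ Ioc (0:ℝ) T, g t ≤
        (c4 * (m.factorial : ℝ) * 4 ^ m / (r ^ 2) ^ m) * t ^ ((m:ℝ) - (ν + (d : ℝ) / 2) - 1) := by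
      intro t ht
      have ht0 : (0:ℝ) < t := ht.1
      have hrne : (r:ℝ) ≠ 0 := hr0.ne'
      have htne : t ≠ 0 := ht0.ne'
      have hz : (0:ℝ) < r ^ 2 / 4 / t := div_pos (by positivity) ht0
      have ebound : Real.exp (-(r ^ 2 / 4 / t))
          ≤ (m.factorial : ℝ) * 4 ^ m * t ^ m / (r ^ 2) ^ m := by
        refine le_trans (exp_neg_le_factorial_div _ hz m) (le_of_eq ?_)
        rw [div_pow, div_pow]
        field_simp
      have et : (t:ℝ) ^ (m:ℕ) * t ^ (-(ν + (d : ℝ) / 2) - 1)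
          = t ^ ((m:ℝ) - (ν + (d : ℝ) / 2) - 1) := by
        rw [← Real.rpow_natCast t m, ← Real.rpow_add ht0]; congr 1; ring
      simp only [hg_def]
      rw [aux_ptwise d ν r ht0]
      calc c4 * (t ^ (-(ν + (d : ℝ) / 2) - 1) * Real.exp (-(r ^ 2 / 4 / t)))
          ≤ c4 * (t ^ (-(ν + (d : ℝ) / 2) - 1)
              * ((m.factorial : ℝ) * 4 ^ m * t ^ m / (r ^ 2) ^ m)) := by
            refine mul_le_mul_of_nonneg_left ?_ hc4.le
            exact mul_le_mul_of_nonneg_left ebound (Real.rpow_nonneg ht0.le _)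
        _ = (c4 * (m.factorial : ℝ) * 4 ^ m / (r ^ 2) ^ m)
              * t ^ ((m:ℝ) - (ν + (d : ℝ) / 2) - 1) := by rw [← et]; ring
    calc (∫ t in Ioc (0:ℝ) T, g t)
        ≤ ∫ t in Ioc (0:ℝ) T, (c4 * (m.factorial : ℝ) * 4 ^ m / (r ^ 2) ^ m)
            * t ^ ((m:ℝ) - (ν + (d : ℝ) / 2) - 1) :=
          setIntegral_mono_on hg_int1 (hBint.const_mul _) measurableSet_Ioc hstep
      _ = B' / (r ^ 2) ^ m := by rw [integral_const_mul, ← hB_def, hB'_def]; ring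
  -- turning the eventual bounds into the needed inequalities
  have hr2p : ((r:ℝ) ^ 2) ^ (ν + (d : ℝ) / 2) = r ^ (2 * (ν + (d : ℝ) / 2)) := by
    rw [← Real.rpow_natCast r 2, ← Real.rpow_mul hr0.le]; norm_num
  have hrneg : r ^ (-2 * ν - (d : ℝ)) = (r ^ (2 * (ν + (d : ℝ) / 2)))⁻¹ := by
    rw [← Real.rpow_neg hr0.le]; congr 1; ring
  have hpow : (0:ℝ) < r ^ (2 * (ν + (d : ℝ) / 2)) := Real.rpow_pos_of_pos hr0 _
  have head_small : c4 * Real.exp (-r ^ 2 / (4 * T)) * A₀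
      ≤ ε / 4 * (C * r ^ (-2 * ν - (d : ℝ))) := by
    have h1' : c4 * A₀ * (r ^ (2 * (ν + (d : ℝ) / 2)) * Real.exp (-r ^ 2 / (4 * T)))
        ≤ ε / 4 * C := by
      refine le_of_lt (lt_of_le_of_lt (le_of_eq ?_) h1)
      rw [hr2p, show Real.exp (-(1 / (4 * T)) * r ^ 2) = Real.exp (-r ^ 2 / (4 * T)) from by
        congr 1; ring]
    rw [hrneg, show ε / 4 * (C * (r ^ (2 * (ν + (d : ℝ) / 2)))⁻¹)
      = (ε / 4 * C) / r ^ (2 * (ν + (d : ℝ) / 2)) from by ring, le_div_iff₀ hpow]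
    calc c4 * Real.exp (-r ^ 2 / (4 * T)) * A₀ * r ^ (2 * (ν + (d : ℝ) / 2))
        = c4 * A₀ * (r ^ (2 * (ν + (d : ℝ) / 2)) * Real.exp (-r ^ 2 / (4 * T))) := by ring
      _ ≤ ε / 4 * C := h1'
  have hr2m : ((r:ℝ) ^ 2) ^ (m:ℕ) = r ^ (2 * (m:ℝ)) := by
    rw [← pow_mul, ← Real.rpow_natCast r (2 * m)]; congr 1; push_cast; ring
  have headg_small : K * (B' / (r ^ 2) ^ m) ≤ ε / 4 * (C * r ^ (-2 * ν - (d : ℝ))) := by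
    rw [hrneg, show ε / 4 * (C * (r ^ (2 * (ν + (d : ℝ) / 2)))⁻¹)
      = (ε / 4 * C) / r ^ (2 * (ν + (d : ℝ) / 2)) from by ring, le_div_iff₀ hpow]
    calc K * (B' / (r ^ 2) ^ m) * r ^ (2 * (ν + (d : ℝ) / 2))
        = (K * B') * (r ^ (2 * (ν + (d : ℝ) / 2)) / r ^ (2 * (m:ℝ))) := by rw [hr2m]; ring
      _ = (K * B') * r ^ (2 * (ν + (d : ℝ) / 2) - 2 * (m:ℝ)) := by rw [← Real.rpow_sub hr0]
      _ ≤ ε / 4 * C := h2.le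
  -- assemble
  have hIg : K * (∫ t in Ioi (0:ℝ), g t) = C * r ^ (-2 * ν - (d : ℝ)) := by
    simp only [hg_def]; exact hKJ r hr0
  have hDpos : (0:ℝ) < C * r ^ (-2 * ν - (d : ℝ)) :=
    mul_pos hC0 (Real.rpow_pos_of_pos hr0 _)
  have hKsplit : K * (∫ t in Ioi (0:ℝ), g t)
      = K * (∫ t in Ioc (0:ℝ) T, g t) + K * (∫ t in Ioi T, g t) := by
    rw [hsplitg]; ring
  have hKG1_nn : 0 ≤ K * ∫ t in Ioc (0:ℝ) T, g t := mul_nonneg hK.le hG1_nn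
  have k1 : K * (∫ t in Ioi T, g t) ≤ C * r ^ (-2 * ν - (d : ℝ)) := by linarith
  have k2 : (∫ t in Ioi T, f t) ≤ (1 + δ) * (C * r ^ (-2 * ν - (d : ℝ))) := by
    calc (∫ t in Ioi T, f t) ≤ (1 + δ) * K * ∫ t in Ioi T, g t := tail_ub
      _ = (1 + δ) * (K * ∫ t in Ioi T, g t) := by ring
      _ ≤ (1 + δ) * (C * r ^ (-2 * ν - (d : ℝ))) :=
          mul_le_mul_of_nonneg_left k1 (by linarith)
  have hup : (∫ t in Ioi (0:ℝ), f t)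
      ≤ (1 + δ + ε / 4) * (C * r ^ (-2 * ν - (d : ℝ))) := by
    have := le_trans head_f head_small
    rw [hsplitf]; linarith
  have k3 : K * (∫ t in Ioc (0:ℝ) T, g t) ≤ ε / 4 * (C * r ^ (-2 * ν - (d : ℝ))) :=
    le_trans (mul_le_mul_of_nonneg_left headg hK.le) headg_small
  have kG2 : K * (∫ t in Ioi T, g t)
      = C * r ^ (-2 * ν - (d : ℝ)) - K * ∫ t in Ioc (0:ℝ) T, g t := by linarith
  have k5 : (1 - δ) * (C * r ^ (-2 * ν - (d : ℝ))) - K * (∫ t in Ioc (0:ℝ) T, g t)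
      ≤ ∫ t in Ioi T, f t := by
    have kk : (1 - δ) * (C * r ^ (-2 * ν - (d : ℝ))) - K * (∫ t in Ioc (0:ℝ) T, g t)
        ≤ (1 - δ) * (K * ∫ t in Ioi T, g t) := by
      rw [kG2]
      have hδKG1 : 0 ≤ δ * (K * ∫ t in Ioc (0:ℝ) T, g t) := mul_nonneg hδ0.le hKG1_nn
      have eexpand : (1 - δ) * (C * r ^ (-2 * ν - (d : ℝ)) - K * ∫ t in Ioc (0:ℝ) T, g t)
          = (1 - δ) * (C * r ^ (-2 * ν - (d : ℝ))) - (K * ∫ t in Ioc (0:ℝ) T, g t)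
            + δ * (K * ∫ t in Ioc (0:ℝ) T, g t) := by ring
      linarith
    calc (1 - δ) * (C * r ^ (-2 * ν - (d : ℝ))) - K * (∫ t in Ioc (0:ℝ) T, g t)
        ≤ (1 - δ) * (K * ∫ t in Ioi T, g t) := kk
      _ = (1 - δ) * K * (∫ t in Ioi T, g t) := by ring
      _ ≤ ∫ t in Ioi T, f t := tail_lb
  have hlo : (1 - δ - ε / 4) * (C * r ^ (-2 * ν - (d : ℝ)))
      ≤ ∫ t in Ioi (0:ℝ), f t := by
    rw [hsplitf]; linarith
  rw [Real.dist_eq, abs_lt]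
  have h_up : (∫ t in Ioi (0:ℝ), f t) / (C * r ^ (-2 * ν - (d : ℝ))) ≤ 1 + δ + ε / 4 := by
    rw [div_le_iff₀ hDpos]; linarith
  have h_lo : 1 - δ - ε / 4 ≤ (∫ t in Ioi (0:ℝ), f t) / (C * r ^ (-2 * ν - (d : ℝ))) := by
    rw [le_div_iff₀ hDpos]; linarith
  constructor <;> linarith

/-- Asymptotics of the Gaussian-subordinated function: if `h(t) ~ K t^{-ν-1}` at
infinity and `t^{-d/2} h(t)` is integrable near `0`, then
`F(x) = ∫_0^∞ (4πt)^{-d/2} e^{-|x|²/(4t)} h(t) dt ~ K (2^{2ν}/π^{d/2}) Γ(ν+d/2) |x|^{-2ν-d}`. -/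
theorem subordinated_asymptotics (d : ℕ) (hd : 1 ≤ d) (h : ℝ → ℝ) (K ν : ℝ)
    (hK : 0 < K) (hν : 0 < ν) (hmeas : Measurable h) (hnn : ∀ t : ℝ, 0 < t → 0 ≤ h t)
    (hasymp : Filter.Tendsto (fun t : ℝ => h t / (K * t ^ (-ν - 1)))
      Filter.atTop (nhds 1))
    (hint : ∀ t₀ : ℝ, 0 < t₀ →
      MeasureTheory.IntegrableOn (fun t : ℝ => t ^ (-(d : ℝ) / 2) * h t) (Set.Ioc 0 t₀)) :
    Filter.Tendsto
      (fun x : EuclideanSpace ℝ (Fin d) =>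
        (∫ t in Set.Ioi (0 : ℝ),
            (4 * Real.pi * t) ^ (-(d : ℝ) / 2) * Real.exp (-‖x‖ ^ 2 / (4 * t)) * h t) /
          (K * (2 ^ (2 * ν) / Real.pi ^ ((d : ℝ) / 2)) * Real.Gamma (ν + d / 2) *
            ‖x‖ ^ (-2 * ν - d)))
      (Filter.comap norm Filter.atTop) (nhds 1) :=
  (subord_main d hd h K ν hK hν hmeas hnn hasymp hint).comp tendsto_comap
end
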